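/- Let γ > 0 and let (a_n), (b_n) be sequences of nonnegative reals satisfying (1+γ)² a_n² ≤ a_{n−1}² + b_n a_n for all n ≥ 1. Then for every k ∈ ℕ, ∑_{n=1}^k a_n ≤ (1/γ)(a_0 + ∑_{n=1}^k b_n). -/

import Mathlib

open Finset

/-- a discrete Gronwall-type lemma for nonnegative sequences. -/
theorem stmt3 (γ : ℝ) (hγ : 0 < γ) (a b : ℕ → ℝ)
    (ha : ∀ n, 0 ≤ a n) (hb : ∀ n, 0 ≤ b n)
    (hrec : ∀ n : ℕ, 1 ≤ n → (1 + γ)^2 * (a n)^2 ≤ (a (n - 1))^2 + b n * a n) :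
    ∀ k : ℕ, ∑ n ∈ Finset.Icc 1 k, a n ≤ (1 / γ) * (a 0 + ∑ n ∈ Finset.Icc 1 k, b n) := by
  have key : ∀ n : ℕ, 1 ≤ n → (1 + γ) * a n ≤ a (n - 1) + b n := by
    intro n hn
    by_contra h
    push_neg at h
    have h1 := hrec n hn
    have h2 := ha n
    have h3 := ha (n - 1)
    have h4 := hb n
    nlinarith [sq_nonneg (a (n-1) + b n), mul_nonneg h4 h2, sq_nonneg γ,
      mul_nonneg (le_of_lt hγ) h2]
  have main : ∀ k : ℕ, γ * (∑ n ∈ Finset.Icc 1 k, a n) + a k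
      ≤ a 0 + ∑ n ∈ Finset.Icc 1 k, b n := by
    intro k
    induction k with
    | zero => simp
    | succ k ih =>
      rw [Finset.sum_Icc_succ_top (by omega), Finset.sum_Icc_succ_top (by omega)]
      have hk := key (k+1) (by omega)
      simp only [Nat.add_sub_cancel] at hk
      linarith
  intro k
  have h := main k
  have hak := ha k
  rw [one_div, mul_comm, ← div_eq_mul_inv, le_div_iff₀ hγ]
  linarith
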